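/- Let n1, n2 ≥ 2 be integers and consider the DFA M̂ defined as follows: the alphabet is Σ = (Fin n1 → Fin n1) × (Fin n2 → Fin n2); the states are the subsets of Fin n1 × Fin n2; the initial state is ∅; a state T is final iff T = ∅ or (n1−1, n2−1) ∈ T; the transition on a state E by a letter (f,g) is cl(E′), where E′ = {(f(0), g(0))} if E = ∅ and E′ = {(f(i), g(j)) | (i,j) ∈ E} otherwise, and cl(S) = S ∪ {(0,0)} if (n1−1, n2−1) ∈ S and cl(S) = S otherwise. Then any two distinct subsets T ≠ T′ of Fin n1 × Fin n2, each satisfying ((n1−1, n2−1) ∈ T implies (0,0) ∈ T), are separable in M̂: there exists a word w over Σ such that exactly one of the two states reached by reading w from T and from T′ is final. -/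

import Mathlib

attribute [local instance] Classical.propDecidable

/-- The transition function of the DFA `M̂`: on a state `E ⊆ Fin n1 × Fin n2` and a
letter `(f, g)`, first form `E' = {(f 0, g 0)}` if `E = ∅` and
`E' = {(f i, g j) | (i,j) ∈ E}` otherwise, then add `(0,0)` to `E'` whenever
`(n1-1, n2-1) ∈ E'`. -/
noncomputable def starInterStep (n1 n2 : ℕ) (h1 : 0 < n1) (h2 : 0 < n2)
    (E : Set (Fin n1 × Fin n2)) (a : (Fin n1 → Fin n1) × (Fin n2 → Fin n2)) :
    Set (Fin n1 × Fin n2) :=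
  let E' : Set (Fin n1 × Fin n2) :=
    if E = ∅ then {(a.1 ⟨0, h1⟩, a.2 ⟨0, h2⟩)}
    else (fun p : Fin n1 × Fin n2 => (a.1 p.1, a.2 p.2)) '' E
  if ((⟨n1 - 1, Nat.sub_lt h1 Nat.one_pos⟩ : Fin n1),
      (⟨n2 - 1, Nat.sub_lt h2 Nat.one_pos⟩ : Fin n2)) ∈ E' then
    insert ((⟨0, h1⟩ : Fin n1), (⟨0, h2⟩ : Fin n2)) E'
  else E'

/-- A state `S` of the DFA `M̂` is final iff `S = ∅` or `(n1-1, n2-1) ∈ S`. -/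
def starInterFinal (n1 n2 : ℕ) (h1 : 0 < n1) (h2 : 0 < n2)
    (S : Set (Fin n1 × Fin n2)) : Prop :=
  S = ∅ ∨ ((⟨n1 - 1, Nat.sub_lt h1 Nat.one_pos⟩ : Fin n1),
           (⟨n2 - 1, Nat.sub_lt h2 Nat.one_pos⟩ : Fin n2)) ∈ S

theorem sep_aux (n1 n2 : ℕ) (h1 : 1 < n1) (h2 : 1 < n2)
    (T T' : Set (Fin n1 × Fin n2)) (p : Fin n1 × Fin n2)
    (hp : p ∈ T) (hp' : p ∉ T')
    (hempty : T' = ∅ → p ≠ ((⟨0, by omega⟩ : Fin n1), (⟨0, by omega⟩ : Fin n2))) :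
    ∃ a, starInterFinal n1 n2 (by omega) (by omega)
          (starInterStep n1 n2 (by omega) (by omega) T a) ∧
      ¬ starInterFinal n1 n2 (by omega) (by omega)
          (starInterStep n1 n2 (by omega) (by omega) T' a) := by
  set z1 : Fin n1 := ⟨0, by omega⟩ with hz1
  set z2 : Fin n2 := ⟨0, by omega⟩ with hz2
  set m1 : Fin n1 := ⟨n1 - 1, by omega⟩ with hm1
  set m2 : Fin n2 := ⟨n2 - 1, by omega⟩ with hm2
  have hzm1 : z1 ≠ m1 := by simp [hz1, hm1, Fin.ext_iff]; omega
  have hzm2 : z2 ≠ m2 := by simp [hz2, hm2, Fin.ext_iff]; omega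
  set f : Fin n1 → Fin n1 := fun x => if x = p.1 then m1 else z1 with hf
  set g : Fin n2 → Fin n2 := fun y => if y = p.2 then m2 else z2 with hg
  have hfiff : ∀ x, f x = m1 ↔ x = p.1 := by
    intro x
    by_cases h : x = p.1
    · simp [hf, h]
    · simp [hf, h]; exact hzm1
  have hgiff : ∀ y, g y = m2 ↔ y = p.2 := by
    intro y
    by_cases h : y = p.2
    · simp [hg, h]
    · simp [hg, h]; exact hzm2
  refine ⟨(f, g), ?_, ?_⟩
  · -- step from T is final
    have hTne : T ≠ ∅ := fun h => by simp [h] at hp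
    have himg : (m1, m2) ∈ (fun q : Fin n1 × Fin n2 => (f q.1, g q.2)) '' T := by
      refine ⟨p, hp, ?_⟩
      simp [(hfiff p.1).2 rfl, (hgiff p.2).2 rfl]
    unfold starInterStep starInterFinal
    simp only [hTne, if_false]
    rw [if_pos himg]
    exact Or.inr (Set.mem_insert_of_mem _ himg)
  · -- step from T' is not final
    by_cases hT'e : T' = ∅
    · have hne' : (f z1, g z2) ≠ (m1, m2) := by
        intro h
        have h1' := congrArg Prod.fst h
        have h2' := congrArg Prod.snd h
        simp only at h1' h2'
        exact hempty hT'e (Prod.ext ((hfiff z1).1 h1').symm ((hgiff z2).1 h2').symm)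
      unfold starInterStep starInterFinal
      simp only [hT'e, if_true]
      rw [if_neg (fun h => hne' (Set.mem_singleton_iff.1 h).symm)]
      rintro (h | h)
      · exact (Set.singleton_ne_empty _) h
      · exact hne' ((Set.mem_singleton_iff.1 h).symm)
    · have himg : (m1, m2) ∉ (fun q : Fin n1 × Fin n2 => (f q.1, g q.2)) '' T' := by
        rintro ⟨q, hq, hq2⟩
        have h1' := congrArg Prod.fst hq2
        have h2' := congrArg Prod.snd hq2
        simp only at h1' h2'
        exact hp' (by rwa [Prod.ext ((hfiff q.1).1 h1') ((hgiff q.2).1 h2')] at hq)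
      unfold starInterStep starInterFinal
      simp only [hT'e, if_false]
      rw [if_neg himg]
      rintro (h | h)
      · exact hT'e (Set.image_eq_empty.1 h)
      · exact himg h
theorem sep_half (n1 n2 : ℕ) (h1 : 1 < n1) (h2 : 1 < n2)
    (T T' : Set (Fin n1 × Fin n2)) (p : Fin n1 × Fin n2)
    (hp : p ∈ T) (hp' : p ∉ T') :
    ∃ w : List ((Fin n1 → Fin n1) × (Fin n2 → Fin n2)),
      Xor' (starInterFinal n1 n2 (by omega) (by omega)
              (w.foldl (starInterStep n1 n2 (by omega) (by omega)) T))
           (starInterFinal n1 n2 (by omega) (by omega)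
              (w.foldl (starInterStep n1 n2 (by omega) (by omega)) T')) := by
  have hm1 : ((⟨n1 - 1, by omega⟩ : Fin n1), (⟨n2 - 1, by omega⟩ : Fin n2)) ≠
      ((⟨0, by omega⟩ : Fin n1), (⟨0, by omega⟩ : Fin n2)) := by
    intro h
    have := congrArg (fun q : Fin n1 × Fin n2 => q.1.val) h
    simp at this; omega
  by_cases hT'e : T' = ∅
  · by_cases hp0 : p = ((⟨0, by omega⟩ : Fin n1), (⟨0, by omega⟩ : Fin n2))
    · by_cases htar : ((⟨n1 - 1, by omega⟩ : Fin n1), (⟨n2 - 1, by omega⟩ : Fin n2)) ∈ T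
      · obtain ⟨a, hA, hB⟩ := sep_aux n1 n2 h1 h2 T T' _ htar
          (by simp [hT'e]) (fun _ => hm1)
        exact ⟨[a], Or.inl ⟨hA, hB⟩⟩
      · refine ⟨[], Or.inr ⟨Or.inl hT'e, ?_⟩⟩
        rintro (h | h)
        · have hTe : T = ∅ := h
          rw [hTe] at hp; exact hp
        · exact htar h

    · obtain ⟨a, hA, hB⟩ := sep_aux n1 n2 h1 h2 T T' p hp hp' (fun _ => hp0)
      exact ⟨[a], Or.inl ⟨hA, hB⟩⟩
  · obtain ⟨a, hA, hB⟩ := sep_aux n1 n2 h1 h2 T T' p hp hp' (fun h => absurd h hT'e)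
    exact ⟨[a], Or.inl ⟨hA, hB⟩⟩

/-- any two distinct states `T ≠ T'` of `M̂`, each satisfying
`(n1-1, n2-1) ∈ · → (0,0) ∈ ·`, are separable: some word leads exactly one of them
to a final state. -/
theorem stmt3 (n1 n2 : ℕ) (h1 : 2 ≤ n1) (h2 : 2 ≤ n2)
    (T T' : Set (Fin n1 × Fin n2)) (hne : T ≠ T')
    (hT : (((⟨n1 - 1, by omega⟩ : Fin n1), (⟨n2 - 1, by omega⟩ : Fin n2)) ∈ T) →
      (((⟨0, by omega⟩ : Fin n1), (⟨0, by omega⟩ : Fin n2)) ∈ T))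
    (hT' : (((⟨n1 - 1, by omega⟩ : Fin n1), (⟨n2 - 1, by omega⟩ : Fin n2)) ∈ T') →
      (((⟨0, by omega⟩ : Fin n1), (⟨0, by omega⟩ : Fin n2)) ∈ T')) :
    ∃ w : List ((Fin n1 → Fin n1) × (Fin n2 → Fin n2)),
      Xor' (starInterFinal n1 n2 (by omega) (by omega)
              (w.foldl (starInterStep n1 n2 (by omega) (by omega)) T))
           (starInterFinal n1 n2 (by omega) (by omega)
              (w.foldl (starInterStep n1 n2 (by omega) (by omega)) T')) := by
  have : ∃ p, (p ∈ T ∧ p ∉ T') ∨ (p ∈ T' ∧ p ∉ T) := by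
    by_contra h
    push_neg at h
    apply hne
    ext q
    have := h q
    tauto
  obtain ⟨p, hp | hp⟩ := this
  · exact sep_half n1 n2 h1 h2 T T' p hp.1 hp.2
  · obtain ⟨w, hw⟩ := sep_half n1 n2 h1 h2 T' T p hp.1 hp.2
    exact ⟨w, hw.symm⟩
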